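/- Let α: F → G• and γ: G• → H• be morphisms in a derived category of sheaves with F a sheaf (concentrated in degree 0), such that the composition β = γ∘α is a quasi-isomorphism and H^i(G•) = 0 for i ≠ 0 with H^0(G•) a rank one torsion-free sheaf. If the induced map H^0(γ) is injective, then γ and α are both quasi-isomorphisms. -/
import Mathlib


open CategoryTheory CategoryTheory.Limits DerivedCategory

section Aux

universe w v u

variable {C : Type u} [Category.{v} C] [Abelian C] [HasDerivedCategory.{w} C]

open Pretriangulated

lemma aux_isZero_of_homology (X : DerivedCategory C)
    (h : ∀ n : ℤ, IsZero ((homologyFunctor C n).obj X)) : IsZero X := by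
  have := Localization.essSurj (Q (C := C)) (HomologicalComplex.quasiIso C (ComplexShape.up ℤ))
  obtain ⟨K, ⟨e⟩⟩ : ∃ K : CochainComplex C ℤ, Nonempty (Q.obj K ≅ X) :=
    ⟨_, ⟨Q.objObjPreimageIso X⟩⟩
  have hK : ∀ n : ℤ, IsZero (K.homology n) := fun n =>
    ((homologyFunctorFactors C n).symm.app K).isZero_iff.2
      (((homologyFunctor C n).mapIso e).isZero_iff.2 (h n))
  obtain ⟨Z, hZ⟩ := HasZeroObject.zero (C := CochainComplex C ℤ)
  have : QuasiIso (hZ.from_ K) := by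
    rw [quasiIso_iff]
    intro n
    rw [quasiIsoAt_iff_exactAt]
    · rw [HomologicalComplex.exactAt_iff_isZero_homology]
      exact ((HomologicalComplex.homologyFunctor C _ n).map_isZero hZ)
    · rw [HomologicalComplex.exactAt_iff_isZero_homology]
      exact hK n
  have : IsIso (Q.map (hZ.from_ K)) := inferInstance
  refine IsZero.of_iso ?_ (e.symm ≪≫ asIso (Q.map (hZ.from_ K)))
  exact Q.map_isZero hZ

lemma aux_isIso_of_homology {X Y : DerivedCategory C} (f : X ⟶ Y)
    (h : ∀ n : ℤ, IsIso ((homologyFunctor C n).map f)) : IsIso f := by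
  obtain ⟨Z, g, k, hT⟩ := Pretriangulated.distinguished_cocone_triangle f
  refine (Triangle.isZero₃_iff_isIso₁ _ hT).1 (aux_isZero_of_homology _ fun n => ?_)
  have h1 : (homologyFunctor C n).map (Triangle.mk f g k).mor₂ = 0 := by
    rw [← HomologySequence.epi_homologyMap_mor₁_iff _ hT n]
    haveI := h n
    exact inferInstanceAs (Epi ((homologyFunctor C n).map f))
  have h2 : HomologySequence.δ (Triangle.mk f g k) n (n + 1) rfl = 0 := by
    rw [← HomologySequence.mono_homologyMap_mor₁_iff _ hT n (n + 1) rfl]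
    haveI := h (n + 1)
    exact inferInstanceAs (Mono ((homologyFunctor C (n + 1)).map f))
  have := HomologySequence.exact₃ _ hT n (n + 1) rfl
  exact this.isZero_X₂ h1 h2

lemma aux_isZero_homology_single (A : C) (n : ℤ) (hn : n ≠ 0) :
    IsZero ((homologyFunctor C n).obj ((singleFunctor C 0).obj A)) := by
  have e : (singleFunctor C 0).obj A ≅
      Q.obj ((HomologicalComplex.single C (ComplexShape.up ℤ) 0).obj A) :=
    (((SingleFunctors.evaluation _ _ 0).mapIso (singleFunctorsPostcompQIso C)).app A : _)
  refine IsZero.of_iso ?_ ((homologyFunctor C n).mapIso e)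
  refine IsZero.of_iso ?_ ((homologyFunctorFactors C n).symm.app _).symm
  exact HomologicalComplex.isZero_single_obj_homology _ _ A n hn

end Aux

/-- A module `N` over a domain `R` is torsion-free of rank one: it is nonzero, has no
torsion, and any two elements are linearly dependent. -/
def IsRankOneTorsionFree (R : Type) [CommRing R] [IsDomain R]
    (N : Type*) [AddCommGroup N] [Module R N] : Prop :=
  NoZeroSMulDivisors R N ∧ Nontrivial N ∧
    ∀ x y : N, ∃ a b : R, ¬(a = 0 ∧ b = 0) ∧ a • x = b • y

/-- Let `α : F → G•` and `γ : G• → H•` be morphisms in a derived category (of sheaves of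
modules) with `F` a sheaf concentrated in degree `0`, such that the composition
`β = γ ∘ α` is a quasi-isomorphism, `H^i(G•) = 0` for `i ≠ 0`, and `H^0(G•)` is a rank one
torsion-free sheaf.  If the induced map `H^0(γ)` is injective, then `γ` and `α` are both
quasi-isomorphisms. -/
theorem quasiIso_of_factorization_through_rank_one
    (R : Type) [CommRing R] [IsDomain R]
    [HasDerivedCategory.{1} (ModuleCat.{0} R)]
    (F : ModuleCat R) (G H : DerivedCategory (ModuleCat R))
    (α : (singleFunctor (ModuleCat R) 0).obj F ⟶ G) (γ : G ⟶ H)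
    (hβ : IsIso (α ≫ γ))
    (hG : ∀ i : ℤ, i ≠ 0 → IsZero ((homologyFunctor (ModuleCat R) i).obj G))
    (hN : IsRankOneTorsionFree R ((homologyFunctor (ModuleCat R) 0).obj G))
    (hmono : Mono ((homologyFunctor (ModuleCat R) 0).map γ)) :
    IsIso γ ∧ IsIso α := by
  have hγ : IsIso γ := by
    apply aux_isIso_of_homology
    intro n
    have hβn : IsIso ((homologyFunctor (ModuleCat R) n).map (α ≫ γ)) := inferInstance
    rw [Functor.map_comp] at hβn
    by_cases hn : n = 0
    · subst hn
      have : Epi ((homologyFunctor (ModuleCat R) 0).map γ) := epi_of_epi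
        ((homologyFunctor (ModuleCat R) 0).map α) _
      exact isIso_of_mono_of_epi _
    · have hZG : IsZero ((homologyFunctor (ModuleCat R) n).obj G) := hG n hn
      have hZH : IsZero ((homologyFunctor (ModuleCat R) n).obj H) := by
        refine IsZero.of_iso ?_ (asIso ((homologyFunctor (ModuleCat R) n).map α ≫
          (homologyFunctor (ModuleCat R) n).map γ)).symm
        exact aux_isZero_homology_single F n hn
      rw [hZG.eq_of_src ((homologyFunctor (ModuleCat R) n).map γ) ((hZG.iso hZH).hom)]
      infer_instance
  refine ⟨hγ, ?_⟩
  have : α = (α ≫ γ) ≫ inv γ := by simp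
  rw [this]
  infer_instance
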